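/- Let G be a graph and u a vertex with d(u) ≥ 10 distinct neighbors u₀,…,u_{t−1} arranged cyclically, and suppose that for each of at least 10 indices c_j, the edge uu_{c_j} lies in a subgraph Θ_{uc_j} isomorphic to Θ₄ on vertex set {u, u_{c_j−1}, u_{c_j}, u_{c_j+1}} (indices mod t). If G contains a triangle C avoiding u, then G contains a vertex-disjoint union of C₃ and Θ₄. -/

import Mathlib

/-- Θ₄ : K₄ minus the edge 1-3. -/
def theta4 : SimpleGraph (Fin 4) :=
  (SimpleGraph.completeGraph (Fin 4)).deleteEdges {s(1, 3)}

/-- C₃ ∪̇ Θ₄ : the vertex-disjoint union of a triangle and Θ₄. -/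
def c3Theta4 : SimpleGraph (Fin 3 ⊕ Fin 4) :=
  SimpleGraph.fromRel (fun x y =>
    match x, y with
    | Sum.inl a, Sum.inl b => a ≠ b
    | Sum.inr a, Sum.inr b => theta4.Adj a b
    | _, _ => False)

/-- `G` contains `H` as a subgraph. -/
def Contains {V W : Type} (G : SimpleGraph V) (H : SimpleGraph W) : Prop :=
  ∃ φ : H →g G, Function.Injective φ

set_option maxHeartbeats 1000000 in
lemma build_c3Theta4 {V : Type} (G : SimpleGraph V) (a b c u p q r : V)
    (hab : G.Adj a b) (hbc : G.Adj b c) (hca : G.Adj c a)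
    (hup : G.Adj u p) (huq : G.Adj u q) (hur : G.Adj u r)
    (hpq : G.Adj p q) (hqr : G.Adj q r)
    (hpr : p ≠ r)
    (hap : a ≠ p) (haq : a ≠ q) (har : a ≠ r) (hau : a ≠ u)
    (hbp : b ≠ p) (hbq : b ≠ q) (hbr : b ≠ r) (hbu : b ≠ u)
    (hcp : c ≠ p) (hcq : c ≠ q) (hcr : c ≠ r) (hcu : c ≠ u) :
    Contains G c3Theta4 := by
  let f : Fin 3 ⊕ Fin 4 → V := fun x =>
    match x with
    | Sum.inl 0 => a
    | Sum.inl 1 => b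
    | Sum.inl 2 => c
    | Sum.inr 0 => u
    | Sum.inr 1 => p
    | Sum.inr 2 => q
    | Sum.inr 3 => r
  have hadj : ∀ x y, c3Theta4.Adj x y → G.Adj (f x) (f y) := by
    intro x y hxy
    rw [c3Theta4, SimpleGraph.fromRel_adj] at hxy
    rcases x with x | x <;> rcases y with y | y <;> fin_cases x <;> fin_cases y <;>
      simp only [theta4, SimpleGraph.completeGraph, SimpleGraph.deleteEdges_adj, SimpleGraph.top_adj,
        Set.mem_singleton_iff, ne_eq, Sum.inl.injEq, Sum.inr.injEq] at hxy <;>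
      simp only [f] <;>
      first
        | (exfalso; revert hxy; decide)
        | exact hab | exact hbc | exact hca | exact hab.symm | exact hbc.symm | exact hca.symm
        | exact hup | exact huq | exact hur | exact hup.symm | exact huq.symm | exact hur.symm
        | exact hpq | exact hqr | exact hpq.symm | exact hqr.symm
  refine ⟨⟨f, fun {x y} => hadj x y⟩, ?_⟩
  have hup' := hup.ne
  have huq' := huq.ne
  have hur' := hur.ne
  have hpq' := hpq.ne
  have hqr' := hqr.ne
  have hab' := hab.ne
  have hbc' := hbc.ne
  have hca' := hca.ne
  intro x y hxy
  rcases x with x | x <;> rcases y with y | y <;> fin_cases x <;> fin_cases y <;>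
    simp only [f] at hxy <;>
    first
      | rfl
      | (exfalso; first
          | exact hab' hxy | exact hbc' hxy | exact hca' hxy
          | exact hab' hxy.symm | exact hbc' hxy.symm | exact hca' hxy.symm
          | exact hau hxy | exact hbu hxy | exact hcu hxy
          | exact hau hxy.symm | exact hbu hxy.symm | exact hcu hxy.symm
          | exact hap hxy | exact haq hxy | exact har hxy
          | exact hbp hxy | exact hbq hxy | exact hbr hxy
          | exact hcp hxy | exact hcq hxy | exact hcr hxy
          | exact hap hxy.symm | exact haq hxy.symm | exact har hxy.symm
          | exact hbp hxy.symm | exact hbq hxy.symm | exact hbr hxy.symm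
          | exact hcp hxy.symm | exact hcq hxy.symm | exact hcr hxy.symm
          | exact hup' hxy | exact huq' hxy | exact hur' hxy
          | exact hup' hxy.symm | exact huq' hxy.symm | exact hur' hxy.symm
          | exact hpq' hxy | exact hqr' hxy | exact hpr hxy
          | exact hpq' hxy.symm | exact hqr' hxy.symm | exact hpr hxy.symm)


/-- Let u have t ≥ 10 distinct neighbors w 0, …, w (t−1) arranged
cyclically (indexed by `ZMod t`), and suppose for each index j in a set S of at
least 10 indices the edge u-(w j) lies in a Θ₄ on {u, w (j−1), w j, w (j+1)},
i.e. the two triangles u (w (j−1)) (w j) and u (w j) (w (j+1)) are present.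
If G contains a triangle avoiding u, then G contains C₃ ∪̇ Θ₄. -/
theorem stmt8 {V : Type} (G : SimpleGraph V) (u : V) (t : ℕ) (ht : 10 ≤ t)
    (w : ZMod t → V) (hw : Function.Injective w)
    (hnbr : ∀ i : ZMod t, G.Adj u (w i))
    (S : Finset (ZMod t)) (hS : 10 ≤ S.card)
    (hTheta : ∀ j ∈ S, G.Adj (w (j - 1)) (w j) ∧ G.Adj (w j) (w (j + 1)))
    (a b c : V) (hab : G.Adj a b) (hbc : G.Adj b c) (hca : G.Adj c a)
    (hau : a ≠ u) (hbu : b ≠ u) (hcu : c ≠ u) :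
    Contains G c3Theta4 := by
  classical
  haveI : NeZero t := ⟨by omega⟩
  set P : Finset (ZMod t) := Finset.univ.filter (fun i => w i = a ∨ w i = b ∨ w i = c) with hP
  have hPcard : P.card ≤ 3 := by
    have h1 : P.card ≤ ({a, b, c} : Finset V).card := by
      apply Finset.card_le_card_of_injOn w
      · intro i hi
        simp only [hP, Finset.mem_coe, Finset.mem_filter] at hi
        simp [hi.2]
      · exact fun i _ j _ h => hw h
    have h2 : ({a,b,c} : Finset V).card ≤ 3 := by
      apply le_trans (Finset.card_insert_le _ _)
      have := Finset.card_insert_le b ({c} : Finset V)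
      simp only [Finset.card_singleton] at this
      omega
    omega
  set Bad : Finset (ZMod t) := P.biUnion (fun i => {i - 1, i, i + 1}) with hB
  have hBcard : Bad.card ≤ 9 := by
    have h1 : Bad.card ≤ ∑ i ∈ P, ({i - 1, i, i + 1} : Finset (ZMod t)).card :=
      Finset.card_biUnion_le
    have h2 : ∑ i ∈ P, ({i - 1, i, i + 1} : Finset (ZMod t)).card ≤ ∑ i ∈ P, 3 := by
      apply Finset.sum_le_sum
      intro i _
      apply le_trans (Finset.card_insert_le _ _)
      have := Finset.card_insert_le i ({i + 1} : Finset (ZMod t))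
      simp only [Finset.card_singleton] at this
      omega
    rw [Finset.sum_const, smul_eq_mul] at h2
    omega
  have hex : ∃ j ∈ S, j ∉ Bad := by
    by_contra h
    push_neg at h
    have := Finset.card_le_card (h : S ⊆ Bad)
    omega
  obtain ⟨j, hjS, hjB⟩ := hex
  have hgood : ∀ i : ZMod t, j ∈ ({i - 1, i, i + 1} : Finset (ZMod t)) →
      w i ≠ a ∧ w i ≠ b ∧ w i ≠ c := by
    intro i hi
    by_contra h
    apply hjB
    rw [hB]
    apply Finset.mem_biUnion.2
    refine ⟨i, ?_, hi⟩
    simp only [hP, Finset.mem_filter, Finset.mem_univ, true_and]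
    tauto
  have hga := hgood (j - 1) (by simp only [Finset.mem_insert, Finset.mem_singleton]; right; right; ring)
  have hgb := hgood j (by simp)
  have hgc := hgood (j + 1) (by simp only [Finset.mem_insert, Finset.mem_singleton]; left; ring)
  haveI : Fact (1 < t) := ⟨by omega⟩
  have h10 : (1 : ZMod t) ≠ 0 := one_ne_zero
  have h20 : (2 : ZMod t) ≠ 0 := by
    have h2 : ((2 : ℕ) : ZMod t) = 0 ↔ t ∣ 2 := ZMod.natCast_eq_zero_iff _ _
    intro h
    have : t ∣ 2 := h2.1 (by exact_mod_cast h)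
    have := Nat.le_of_dvd (by norm_num) this
    omega
  have hne3 : j - 1 ≠ j + 1 := by
    intro h; apply h20; linear_combination -h
  have hpr : w (j - 1) ≠ w (j + 1) := fun h => hne3 (hw h)
  obtain ⟨hT1, hT2⟩ := hTheta j hjS
  exact build_c3Theta4 G a b c u (w (j - 1)) (w j) (w (j + 1))
    hab hbc hca (hnbr _) (hnbr _) (hnbr _) hT1 hT2 hpr
    (fun h => hga.1 h.symm) (fun h => hgb.1 h.symm) (fun h => hgc.1 h.symm) hau
    (fun h => hga.2.1 h.symm) (fun h => hgb.2.1 h.symm) (fun h => hgc.2.1 h.symm) hbu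
    (fun h => hga.2.2 h.symm) (fun h => hgb.2.2 h.symm) (fun h => hgc.2.2 h.symm) hcu
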